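/- Completeness of CSMS: every L_CSL-formula that is valid in every CSL-preferential model is derivable in the Hilbert system CSMS. -/

import Mathlib

/-- Formulas of the language L_CSL: propositional variables, ⊥, negation,
conjunction, and the comparative similarity connective `cls` (A ⇇ B). -/
inductive CSLForm : Type
  | var : ℕ → CSLForm
  | bot : CSLForm
  | neg : CSLForm → CSLForm
  | and : CSLForm → CSLForm → CSLForm
  | cls : CSLForm → CSLForm → CSLForm

namespace CSLForm

def top : CSLForm := neg bot
def or (A B : CSLForm) : CSLForm := neg (and (neg A) (neg B))
def imp (A B : CSLForm) : CSLForm := or (neg A) B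

end CSLForm

/-- A boolean valuation respecting the classical connectives
(⇇-formulas and variables are treated as atoms). -/
def IsBoolVal (v : CSLForm → Bool) : Prop :=
  v .bot = false ∧ (∀ A, v (.neg A) = !v A) ∧ (∀ A B, v (.and A B) = (v A && v B))

/-- Classical tautologies of L_CSL. -/
def CSLTautology (A : CSLForm) : Prop := ∀ v, IsBoolVal v → v A = true

/-- The Hilbert system CSMS. -/
inductive CSMS : CSLForm → Prop
  | taut {A : CSLForm} : CSLTautology A → CSMS A
  | mp {A B : CSLForm} : CSMS (A.imp B) → CSMS A → CSMS B
  | mon {A B : CSLForm} (C : CSLForm) : CSMS (A.imp B) → CSMS ((A.cls C).imp (B.cls C))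
  | ax1 (A B : CSLForm) : CSMS ((A.cls B).neg.or (B.cls A).neg)
  | ax2 (A B C : CSLForm) : CSMS ((A.cls B).imp ((A.cls C).or (C.cls B)))
  | ax3 (A B : CSLForm) : CSMS ((A.and B.neg).imp (A.cls B))
  | ax4 (A B : CSLForm) : CSMS ((A.cls B).imp B.neg)
  | ax5 (A B C : CSLForm) : CSMS (((A.cls B).and (A.cls C)).imp (A.cls (B.or C)))
  | ax6 (A : CSLForm) : CSMS ((A.cls .bot).imp (((A.cls .bot).neg.cls .bot).neg))

/-- Semantic extension of a formula, given preferential relations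
`pref w x y` (meaning x ≺_w y) and a valuation of propositional variables. -/
def prefEval {W : Type} (pref : W → W → W → Prop) (val : ℕ → Set W) :
    CSLForm → Set W
  | .var i => val i
  | .bot => ∅
  | .neg A => (prefEval pref val A)ᶜ
  | .and A B => prefEval pref val A ∩ prefEval pref val B
  | .cls A B =>
      {w | ∃ x ∈ prefEval pref val A, ∀ y ∈ prefEval pref val B, pref w x y}

/-- A CSL-preferential model. -/
structure CSLPrefModel (W : Type) where
  ne : Nonempty W
  pref : W → W → W → Prop
  modular : ∀ w x y z, pref w x y → pref w z y ∨ pref w x z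
  centered : ∀ w x, x = w ∨ pref w w x
  limit : ∀ w (X : Set W), X.Nonempty → {y ∈ X | ∀ z, pref w z y → z ∉ X}.Nonempty
  val : ℕ → Set W

def CSLPrefModel.eval {W : Type} (M : CSLPrefModel W) : CSLForm → Set W :=
  prefEval M.pref M.val

/-- Distance from a point to a set, in ℝ≥0∞ (so that it is ∞ on the empty set). -/
noncomputable def setDist {W : Type} (d : W → W → ℝ) (w : W) (X : Set W) : ENNReal :=
  ⨅ x ∈ X, ENNReal.ofReal (d w x)

/-- A CSL-distance minspace model. -/
structure CSLMinModel (W : Type) where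
  ne : Nonempty W
  dist : W → W → ℝ
  dist_nonneg : ∀ x y, 0 ≤ dist x y
  dist_eq_zero : ∀ x y, dist x y = 0 ↔ x = y
  min_attained : ∀ (w : W) (X : Set W), X.Nonempty → ∃ x ∈ X, ∀ y ∈ X, dist w x ≤ dist w y
  val : ℕ → Set W

noncomputable def CSLMinModel.eval {W : Type} (M : CSLMinModel W) : CSLForm → Set W
  | .var i => M.val i
  | .bot => ∅
  | .neg A => (M.eval A)ᶜ
  | .and A B => M.eval A ∩ M.eval B
  | .cls A B => {w | setDist M.dist w (M.eval A) < setDist M.dist w (M.eval B)}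

/-- Iterated disjunction of a list of formulas. -/
def bigOr : List CSLForm → CSLForm
  | [] => .bot
  | [A] => A
  | A :: B :: rest => A.or (bigOr (B :: rest))

/-- Iterated conjunction of a list of formulas. -/
def bigAnd : List CSLForm → CSLForm
  | [] => .top
  | [A] => A
  | A :: B :: rest => A.and (bigAnd (B :: rest))

/-- Γ is inconsistent wrt CSMS: there are A₁,…,Aₙ ∈ Γ (n ≥ 1) with ⊢ ¬A₁ ⊔ … ⊔ ¬Aₙ. -/
def Inconsistent (Γ : Set CSLForm) : Prop :=
  ∃ L : List CSLForm, L ≠ [] ∧ (∀ A ∈ L, A ∈ Γ) ∧ CSMS (bigOr (L.map .neg))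

def Consistent (Γ : Set CSLForm) : Prop := ¬ Inconsistent Γ

def MaxConsistent (Γ : Set CSLForm) : Prop :=
  Consistent Γ ∧ ∀ A, A ∉ Γ → Inconsistent (insert A Γ)

/-- w^A = {¬B | (A ⇇ B) ∈ w}. -/
def projSet (w : Set CSLForm) (A : CSLForm) : Set CSLForm :=
  {F | ∃ B, F = CSLForm.neg B ∧ (A.cls B) ∈ w}

/-- R(x,y) iff every A ∈ y satisfies (A ⇇ ⊥) ∈ x. -/
def Rrel (x y : Set CSLForm) : Prop := ∀ A, A ∈ y → (A.cls .bot) ∈ x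

/-- The canonical preferential relation: x ≺_w y iff
∃ B ∈ y such that ∀ A ∈ x, (A ⇇ B) ∈ w. -/
def canonPrec (w x y : Set CSLForm) : Prop :=
  ∃ B, B ∈ y ∧ ∀ A, A ∈ x → (A.cls B) ∈ w


/- ### Proof development (auxiliary definitions and lemmas) ### -/

deriving instance DecidableEq for CSLForm

/- ## Boolean reflection for classical tautologies -/

inductive BForm : Type
  | atm : ℕ → BForm
  | fls : BForm
  | neg : BForm → BForm
  | cnj : BForm → BForm → BForm

namespace BForm

def oor (t u : BForm) : BForm := neg (cnj (neg t) (neg u))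
def iimp (t u : BForm) : BForm := oor (neg t) u

def toForm (σ : ℕ → CSLForm) : BForm → CSLForm
  | atm n => σ n
  | fls => .bot
  | neg t => (toForm σ t).neg
  | cnj t u => (toForm σ t).and (toForm σ u)

def evalb (f : ℕ → Bool) : BForm → Bool
  | atm n => f n
  | fls => false
  | neg t => !evalb f t
  | cnj t u => evalb f t && evalb f u

def bound : BForm → ℕ
  | atm n => n+1
  | fls => 0
  | neg t => bound t
  | cnj t u => max (bound t) (bound u)

lemma evalb_congr {f g : ℕ → Bool} :
    ∀ t : BForm, (∀ i < bound t, f i = g i) → evalb f t = evalb g t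
  | atm n, h => h n (Nat.lt_succ_self n)
  | fls, _ => rfl
  | neg t, h => by simp only [evalb, evalb_congr t h]
  | cnj t u, h => by
      simp only [evalb]
      rw [evalb_congr t fun i hi => h i (lt_of_lt_of_le hi (le_max_left _ _)),
        evalb_congr u fun i hi => h i (lt_of_lt_of_le hi (le_max_right _ _))]

lemma key (σ : ℕ → CSLForm) (v : CSLForm → Bool) (hv : IsBoolVal v) :
    ∀ t : BForm, v (toForm σ t) = evalb (fun n => v (σ n)) t
  | atm n => rfl
  | fls => hv.1
  | neg t => by rw [toForm, evalb, hv.2.1, key σ v hv t]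
  | cnj t u => by rw [toForm, evalb, hv.2.2, key σ v hv t, key σ v hv u]

lemma taut_of_check (t : BForm)
    (h : ∀ f : Fin (bound t) → Bool,
      evalb (fun i => if hi : i < bound t then f ⟨i, hi⟩ else false) t = true) :
    ∀ f : ℕ → Bool, evalb f t = true := by
  intro f
  have := h (fun j => f j.val)
  rwa [evalb_congr t (g := f) (by intro i hi; simp [hi])] at this

end BForm

def pl (t : BForm) (σ : ℕ → CSLForm)
    (h : ∀ f : Fin (BForm.bound t) → Bool,
      BForm.evalb (fun i => if hi : i < BForm.bound t then f ⟨i, hi⟩ else false) t = true) :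
    CSMS (BForm.toForm σ t) :=
  CSMS.taut (fun v hv => (BForm.key σ v hv t).trans (BForm.taut_of_check t h (fun n => v (σ n))))

open BForm in
example (A B : CSLForm) : CSMS ((A.and B).imp A) :=
  pl (iimp (cnj (atm 0) (atm 1)) (atm 0)) (fun n => [A, B].getD n .bot) (by decide)

/- ## Derived propositional rules -/
open BForm

private def fσ (L : List CSLForm) : ℕ → CSLForm := fun n => L.getD n .bot

lemma imp_trans {F G H : CSLForm} (h1 : CSMS (F.imp G)) (h2 : CSMS (G.imp H)) :
    CSMS (F.imp H) :=
  (pl (iimp (iimp (atm 0) (atm 1)) (iimp (iimp (atm 1) (atm 2)) (iimp (atm 0) (atm 2))))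
    (fσ [F, G, H]) (by decide)).mp h1 |>.mp h2

lemma and_intro {F G : CSLForm} (h1 : CSMS F) (h2 : CSMS G) : CSMS (F.and G) :=
  (pl (iimp (atm 0) (iimp (atm 1) (cnj (atm 0) (atm 1)))) (fσ [F, G]) (by decide)).mp h1 |>.mp h2

lemma imp_refl (F : CSLForm) : CSMS (F.imp F) := pl (iimp (atm 0) (atm 0)) (fσ [F]) (by decide)

/- conj / disj of lists -/
def conjL : List CSLForm → CSLForm
  | [] => .top
  | A :: L => A.and (conjL L)

def disjL : List CSLForm → CSLForm
  | [] => .bot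
  | A :: L => A.or (disjL L)

lemma conj_proj {L : List CSLForm} {C : CSLForm} (h : C ∈ L) : CSMS ((conjL L).imp C) := by
  induction L with
  | nil => exact absurd h (List.not_mem_nil)
  | cons A L ih =>
    rcases List.mem_cons.1 h with rfl | h
    · exact pl (iimp (cnj (atm 0) (atm 1)) (atm 0)) (fσ [C, conjL L]) (by decide)
    · exact imp_trans
        (pl (iimp (cnj (atm 0) (atm 1)) (atm 1)) (fσ [A, conjL L]) (by decide)) (ih h)

lemma conj_intro_imp {X : CSLForm} {L : List CSLForm}
    (h : ∀ C ∈ L, CSMS (X.imp C)) : CSMS (X.imp (conjL L)) := by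
  induction L with
  | nil => exact pl (iimp (atm 0) (neg fls)) (fσ [X]) (by decide)
  | cons A L ih =>
    have h1 : CSMS (X.imp A) := h A (List.mem_cons_self)
    have h2 : CSMS (X.imp (conjL L)) := ih fun C hC => h C (List.mem_cons_of_mem _ hC)
    exact (pl (iimp (iimp (atm 0) (atm 1)) (iimp (iimp (atm 0) (atm 2))
      (iimp (atm 0) (cnj (atm 1) (atm 2))))) (fσ [X, A, conjL L]) (by decide)).mp h1 |>.mp h2

lemma disj_intro {L : List CSLForm} {C : CSLForm} (h : C ∈ L) : CSMS (C.imp (disjL L)) := by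
  induction L with
  | nil => exact absurd h (List.not_mem_nil)
  | cons A L ih =>
    rcases List.mem_cons.1 h with rfl | h
    · exact pl (iimp (atm 0) (oor (atm 0) (atm 1))) (fσ [C, disjL L]) (by decide)
    · exact imp_trans (ih h)
        (pl (iimp (atm 1) (oor (atm 0) (atm 1))) (fσ [A, disjL L]) (by decide))

/- ## Deducibility, consistency, MCS -/
def DedFrom (Γ : Set CSLForm) (F : CSLForm) : Prop :=
  ∃ L : List CSLForm, (∀ B ∈ L, B ∈ Γ) ∧ CSMS ((conjL L).imp F)

lemma ded_of_thm {Γ : Set CSLForm} {F : CSLForm} (h : CSMS F) : DedFrom Γ F :=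
  ⟨[], by simp, (pl (iimp (atm 0) (iimp (atm 1) (atm 0))) (fσ [F, conjL []]) (by decide)).mp h⟩

lemma ded_of_mem {Γ : Set CSLForm} {F : CSLForm} (h : F ∈ Γ) : DedFrom Γ F :=
  ⟨[F], by simpa using h, conj_proj (List.mem_singleton.2 rfl)⟩

lemma ded_mp {Γ : Set CSLForm} {F G : CSLForm}
    (h1 : DedFrom Γ (F.imp G)) (h2 : DedFrom Γ F) : DedFrom Γ G := by
  obtain ⟨L1, hL1, hd1⟩ := h1
  obtain ⟨L2, hL2, hd2⟩ := h2
  refine ⟨L1 ++ L2, fun B hB => (List.mem_append.1 hB).elim (hL1 B) (hL2 B), ?_⟩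
  have p1 : CSMS ((conjL (L1 ++ L2)).imp (conjL L1)) :=
    conj_intro_imp fun C hC => conj_proj (List.mem_append_left _ hC)
  have p2 : CSMS ((conjL (L1 ++ L2)).imp (conjL L2)) :=
    conj_intro_imp fun C hC => conj_proj (List.mem_append_right _ hC)
  have q1 := imp_trans p1 hd1
  have q2 := imp_trans p2 hd2
  exact (pl (iimp (iimp (atm 0) (iimp (atm 1) (atm 2))) (iimp (iimp (atm 0) (atm 1))
    (iimp (atm 0) (atm 2)))) (fσ [conjL (L1 ++ L2), F, G]) (by decide)).mp q1 |>.mp q2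

lemma ded_mono {Γ Δ : Set CSLForm} {F : CSLForm} (h : Γ ⊆ Δ) (hd : DedFrom Γ F) :
    DedFrom Δ F := by
  obtain ⟨L, hL, hdd⟩ := hd
  exact ⟨L, fun B hB => h (hL B hB), hdd⟩

def ConsSet (Γ : Set CSLForm) : Prop := ¬ DedFrom Γ .bot

def IsMCS (M : Set CSLForm) : Prop := ConsSet M ∧ ∀ F : CSLForm, F ∈ M ∨ F.neg ∈ M

lemma mcs_ded {M : Set CSLForm} (hM : IsMCS M) {F : CSLForm} (h : DedFrom M F) : F ∈ M := by
  by_contra hF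
  rcases hM.2 F with hF' | hF'
  · exact hF hF'
  have hn : DedFrom M F.neg := ded_of_mem hF'
  have : DedFrom M .bot := by
    have t : CSMS (F.imp ((F.neg).imp .bot)) :=
      pl (iimp (atm 0) (iimp (neg (atm 0)) fls)) (fσ [F]) (by decide)
    exact ded_mp (ded_mp (ded_of_thm t) h) hn
  exact hM.1 this

lemma mcs_thm {M : Set CSLForm} (hM : IsMCS M) {F : CSLForm} (h : CSMS F) : F ∈ M :=
  mcs_ded hM (ded_of_thm h)

lemma mcs_mp {M : Set CSLForm} (hM : IsMCS M) {F G : CSLForm}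
    (h1 : F.imp G ∈ M) (h2 : F ∈ M) : G ∈ M :=
  mcs_ded hM (ded_mp (ded_of_mem h1) (ded_of_mem h2))

lemma mcs_imp {M : Set CSLForm} (hM : IsMCS M) {F G : CSLForm}
    (h1 : CSMS (F.imp G)) (h2 : F ∈ M) : G ∈ M :=
  mcs_ded hM (ded_mp (ded_of_thm h1) (ded_of_mem h2))

lemma mcs_not_mem_neg {M : Set CSLForm} (hM : IsMCS M) {F : CSLForm} (h : F ∈ M) :
    F.neg ∉ M := by
  intro hn
  refine hM.1 (ded_mp (ded_mp (ded_of_thm ?_) (ded_of_mem h)) (ded_of_mem hn))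
  exact pl (iimp (atm 0) (iimp (neg (atm 0)) fls)) (fσ [F]) (by decide)

lemma mcs_neg_iff {M : Set CSLForm} (hM : IsMCS M) {F : CSLForm} :
    F.neg ∈ M ↔ F ∉ M := by
  constructor
  · intro h hF; exact mcs_not_mem_neg hM hF h
  · intro h; exact (hM.2 F).resolve_left h

lemma mcs_and_iff {M : Set CSLForm} (hM : IsMCS M) {F G : CSLForm} :
    F.and G ∈ M ↔ F ∈ M ∧ G ∈ M := by
  constructor
  · intro h
    exact ⟨mcs_imp hM (pl (iimp (cnj (atm 0) (atm 1)) (atm 0)) (fσ [F, G]) (by decide)) h,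
      mcs_imp hM (pl (iimp (cnj (atm 0) (atm 1)) (atm 1)) (fσ [F, G]) (by decide)) h⟩
  · rintro ⟨h1, h2⟩
    exact mcs_ded hM (ded_mp (ded_mp (ded_of_thm (pl (iimp (atm 0) (iimp (atm 1)
      (cnj (atm 0) (atm 1)))) (fσ [F, G]) (by decide))) (ded_of_mem h1)) (ded_of_mem h2))

lemma mcs_or_iff {M : Set CSLForm} (hM : IsMCS M) {F G : CSLForm} :
    F.or G ∈ M ↔ F ∈ M ∨ G ∈ M := by
  constructor
  · intro h
    by_contra hc
    push_neg at hc
    have h1 : F.neg ∈ M := (mcs_neg_iff hM).2 hc.1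
    have h2 : G.neg ∈ M := (mcs_neg_iff hM).2 hc.2
    refine hM.1 (ded_mp (ded_mp (ded_mp (ded_of_thm ?_) (ded_of_mem h)) (ded_of_mem h1))
      (ded_of_mem h2))
    exact pl (iimp (oor (atm 0) (atm 1)) (iimp (neg (atm 0)) (iimp (neg (atm 1)) fls)))
      (fσ [F, G]) (by decide)
  · rintro (h | h)
    · exact mcs_imp hM (pl (iimp (atm 0) (oor (atm 0) (atm 1))) (fσ [F, G]) (by decide)) h
    · exact mcs_imp hM (pl (iimp (atm 1) (oor (atm 0) (atm 1))) (fσ [F, G]) (by decide)) h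

lemma mcs_bot_not_mem {M : Set CSLForm} (hM : IsMCS M) : (CSLForm.bot) ∉ M :=
  fun h => hM.1 (ded_of_mem h)

lemma mcs_conj_mem {M : Set CSLForm} (hM : IsMCS M) {L : List CSLForm}
    (h : ∀ C ∈ L, C ∈ M) : conjL L ∈ M := by
  refine mcs_ded hM ⟨L, h, imp_refl _⟩

lemma mcs_disj_elim {M : Set CSLForm} (hM : IsMCS M) {L : List CSLForm}
    (h : disjL L ∈ M) : ∃ C ∈ L, C ∈ M := by
  induction L with
  | nil => exact absurd h (mcs_bot_not_mem hM)
  | cons A L ih =>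
    rcases (mcs_or_iff hM).1 h with h | h
    · exact ⟨A, List.mem_cons_self, h⟩
    · obtain ⟨C, hC, hCM⟩ := ih h
      exact ⟨C, List.mem_cons_of_mem _ hC, hCM⟩
/- ## Deduction lemma and Lindenbaum -/

lemma ded_insert {Γ : Set CSLForm} {F G : CSLForm} (h : DedFrom (insert F Γ) G) :
    DedFrom Γ (F.imp G) := by
  obtain ⟨L, hL, hd⟩ := h
  refine ⟨L.filter (· ≠ F), fun B hB => ?_, ?_⟩
  · have hB' := List.of_mem_filter hB
    rcases hL B (List.mem_of_mem_filter hB) with h | h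
    · exact absurd h (by simpa using hB')
    · exact h
  · have key : CSMS (((conjL (L.filter (· ≠ F))).and F).imp (conjL L)) := by
      refine conj_intro_imp fun C hC => ?_
      by_cases hCF : C = F
      · subst hCF
        exact pl (iimp (cnj (atm 0) (atm 1)) (atm 1)) (fσ [conjL (L.filter (· ≠ C)), C])
          (by decide)
      · have : C ∈ L.filter (· ≠ F) := List.mem_filter.2 ⟨hC, by simpa using hCF⟩
        exact imp_trans (pl (iimp (cnj (atm 0) (atm 1)) (atm 0))
          (fσ [conjL (L.filter (· ≠ F)), F]) (by decide)) (conj_proj this)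
    have := imp_trans key hd
    exact (pl (iimp (iimp (cnj (atm 0) (atm 1)) (atm 2)) (iimp (atm 0) (iimp (atm 1) (atm 2))))
      (fσ [conjL (L.filter (· ≠ F)), F, G]) (by decide)).mp this

lemma cons_insert_or_neg {Γ : Set CSLForm} (hΓ : ConsSet Γ) (F : CSLForm) :
    ConsSet (insert F Γ) ∨ ConsSet (insert F.neg Γ) := by
  by_contra hc
  push_neg at hc
  have h1 : DedFrom Γ (F.imp .bot) := ded_insert (not_not.1 hc.1)
  have h2 : DedFrom Γ ((F.neg).imp .bot) := ded_insert (not_not.1 hc.2)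
  refine hΓ (ded_mp (ded_mp (ded_of_thm ?_) h1) h2)
  exact pl (iimp (iimp (atm 0) fls) (iimp (iimp (neg (atm 0)) fls) fls)) (fσ [F]) (by decide)

lemma chain_common {c : Set (Set CSLForm)} (hchain : IsChain (· ⊆ ·) c) (hcne : c.Nonempty) :
    ∀ L : List CSLForm, (∀ B ∈ L, ∃ Δ ∈ c, B ∈ Δ) → ∃ Δ ∈ c, ∀ B ∈ L, B ∈ Δ := by
  intro L
  induction L with
  | nil => exact fun _ => hcne.imp fun Δ hΔ => ⟨hΔ, by simp⟩
  | cons A L ih =>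
    intro hL
    obtain ⟨Δ1, hΔ1, hΔ1L⟩ := ih (fun B hB => hL B (List.mem_cons_of_mem _ hB))
    obtain ⟨Δ2, hΔ2, hA⟩ := hL A (List.mem_cons_self)
    by_cases heq : Δ1 = Δ2
    · subst heq
      exact ⟨Δ1, hΔ1, fun B hB => by
        rcases List.mem_cons.1 hB with rfl | hB
        · exact hA
        · exact hΔ1L B hB⟩
    rcases hchain hΔ1 hΔ2 heq with hsub | hsub
    · exact ⟨Δ2, hΔ2, fun B hB => by
        rcases List.mem_cons.1 hB with rfl | hB
        · exact hA
        · exact hsub (hΔ1L B hB)⟩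
    · exact ⟨Δ1, hΔ1, fun B hB => by
        rcases List.mem_cons.1 hB with rfl | hB
        · exact hsub hA
        · exact hΔ1L B hB⟩

lemma lindenbaum {Γ : Set CSLForm} (hΓ : ConsSet Γ) : ∃ M, Γ ⊆ M ∧ IsMCS M := by
  have hub : ∀ c ⊆ {Δ : Set CSLForm | ConsSet Δ}, IsChain (· ⊆ ·) c → c.Nonempty →
      ∃ ub ∈ {Δ : Set CSLForm | ConsSet Δ}, ∀ s ∈ c, s ⊆ ub := by
    intro c hcS hchain hcne
    refine ⟨⋃₀ c, ?_, fun s hs => Set.subset_sUnion_of_mem hs⟩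
    intro hded
    obtain ⟨L, hL, hd⟩ := hded
    obtain ⟨Δ, hΔc, hΔL⟩ := chain_common hchain hcne L fun B hB => hL B hB
    exact (hcS hΔc) ⟨L, hΔL, hd⟩
  obtain ⟨M, hΓM, hmax⟩ := zorn_subset_nonempty {Δ : Set CSLForm | ConsSet Δ} hub Γ hΓ
  refine ⟨M, hΓM, hmax.prop, fun F => ?_⟩
  rcases cons_insert_or_neg hmax.prop F with h | h
  · exact Or.inl (hmax.2 h (Set.subset_insert F M) (Set.mem_insert F M))
  · exact Or.inr (hmax.2 h (Set.subset_insert F.neg M) (Set.mem_insert F.neg M))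
/- ## Derived CSL theorems -/
namespace CSLForm
def E (B : CSLForm) : CSLForm := B.cls .bot
end CSLForm

lemma thm_irrefl (B : CSLForm) : CSMS (B.cls B).neg := by
  have := CSMS.ax1 B B
  exact (pl (iimp (oor (neg (atm 0)) (neg (atm 0))) (neg (atm 0))) (fσ [B.cls B])
    (by decide)).mp this

lemma thm_notbot (B : CSLForm) : CSMS ((CSLForm.bot.cls B)).neg := by
  have hmon : CSMS ((CSLForm.bot.cls B).imp (B.cls B)) :=
    CSMS.mon B (pl (iimp fls (atm 0)) (fσ [B]) (by decide))
  have := thm_irrefl B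
  exact (pl (iimp (iimp (atm 0) (atm 1)) (iimp (neg (atm 1)) (neg (atm 0))))
    (fσ [CSLForm.bot.cls B, B.cls B]) (by decide)).mp hmon |>.mp this

/-- right weakening: from ⊢ C → B infer ⊢ (A ⇇ B) → (A ⇇ C). -/
lemma thm_rweak {C B : CSLForm} (A : CSLForm) (h : CSMS (C.imp B)) :
    CSMS ((A.cls B).imp (A.cls C)) := by
  have h2 := CSMS.ax2 A B C
  have h3 : CSMS ((C.cls B).imp (B.cls B)) := CSMS.mon B h
  have h4 := thm_irrefl B
  exact (pl (iimp (iimp (atm 0) (oor (atm 1) (atm 2)))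
      (iimp (iimp (atm 2) (atm 3)) (iimp (neg (atm 3)) (iimp (atm 0) (atm 1)))))
    (fσ [A.cls B, A.cls C, C.cls B, B.cls B]) (by decide)).mp h2 |>.mp h3 |>.mp h4

/-- left disjunction splitting. -/
lemma thm_split (B C D : CSLForm) :
    CSMS (((B.or C).cls D).imp ((B.cls D).or (C.cls D))) := by
  set F := B.or C with hF
  have h1 := CSMS.ax2 F D B
  have h2 := CSMS.ax2 F D C
  have h5 := CSMS.ax5 F B C
  have h6 := thm_irrefl F
  exact (pl (iimp (iimp (atm 0) (oor (atm 1) (atm 2)))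
      (iimp (iimp (atm 0) (oor (atm 3) (atm 4)))
      (iimp (iimp (cnj (atm 1) (atm 3)) (atm 5))
      (iimp (neg (atm 5)) (iimp (atm 0) (oor (atm 2) (atm 4)))))))
    (fσ [F.cls D, F.cls B, B.cls D, F.cls C, C.cls D, F.cls F]) (by decide)).mp
    h1 |>.mp h2 |>.mp h5 |>.mp h6

/-- T: ⊢ B → E B. -/
lemma thm_ET (B : CSLForm) : CSMS (B.imp B.E) := by
  have h3 := CSMS.ax3 B .bot
  exact (pl (iimp (iimp (cnj (atm 0) (neg fls)) (atm 1)) (iimp (atm 0) (atm 1)))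
    (fσ [B, B.E]) (by decide)).mp h3

lemma mon_E {B C : CSLForm} (h : CSMS (B.imp C)) : CSMS (B.E.imp C.E) := CSMS.mon _ h

/-- If ⊢ ¬B then ⊢ ¬E B. -/
lemma thm_nE {B : CSLForm} (h : CSMS B.neg) : CSMS (B.E).neg := by
  have h1 : CSMS (B.imp .bot) :=
    (pl (iimp (neg (atm 0)) (iimp (atm 0) fls)) (fσ [B]) (by decide)).mp h
  have h2 : CSMS (B.E.imp (CSLForm.bot.cls .bot)) := CSMS.mon _ h1
  have h3 := thm_notbot CSLForm.bot
  exact (pl (iimp (iimp (atm 0) (atm 1)) (iimp (neg (atm 1)) (neg (atm 0))))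
    (fσ [B.E, CSLForm.bot.cls .bot]) (by decide)).mp h2 |>.mp h3

/-- 5: ⊢ E B → ¬E(¬E B)  (this is ax6). -/
lemma thm_5 (B : CSLForm) : CSMS (B.E.imp ((B.E.neg).E).neg) := CSMS.ax6 B

/-- B axiom: ⊢ q → ¬E(¬E q). -/
lemma thm_Bax (q : CSLForm) : CSMS (q.imp ((q.E.neg).E).neg) :=
  imp_trans (thm_ET q) (thm_5 q)

/-- 4-dual: ⊢ E (E q) → E q. -/
lemma thm_EE (q : CSLForm) : CSMS ((q.E.E).imp q.E) := by
  -- Mon-E on 5: E(E q) → E(¬E(¬E q))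
  have h1 : CSMS ((q.E.E).imp (((q.E.neg).E).neg).E) := mon_E (thm_5 q)
  -- B axiom with q := ¬E q : ¬E q → ¬E(¬E(¬E q)), i.e. contrapositive gives the rest
  have h2 := thm_Bax (q.E.neg)
  -- h2 : ¬E q → ¬ E (¬ E (¬ E q))
  exact (pl (iimp (iimp (atm 0) (atm 1)) (iimp (iimp (neg (atm 2)) (neg (atm 1)))
      (iimp (atm 0) (atm 2))))
    (fσ [q.E.E, (((q.E.neg).E).neg).E, q.E]) (by decide)).mp h1 |>.mp h2

/-- K1: ⊢ E B ⊓ E C → E (B ⊓ E C). -/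
lemma thm_K1 (B C : CSLForm) : CSMS ((B.E.and C.E).imp ((B.and C.E).E)) := by
  have hsplit : CSMS ((((B.and C.E).or (B.and C.E.neg)).E).imp
      (((B.and C.E).E).or ((B.and C.E.neg).E))) := thm_split _ _ _
  have hmon : CSMS (B.E.imp (((B.and C.E).or (B.and C.E.neg)).E)) :=
    mon_E (pl (iimp (atm 0) (oor (cnj (atm 0) (atm 1)) (cnj (atm 0) (neg (atm 1)))))
      (fσ [B, C.E]) (by decide))
  have hmon2 : CSMS (((B.and C.E.neg).E).imp ((C.E.neg).E)) :=
    mon_E (pl (iimp (cnj (atm 0) (neg (atm 1))) (neg (atm 1))) (fσ [B, C.E]) (by decide))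
  have h5 := thm_5 C
  exact (pl (iimp (iimp (atm 0) (atm 1)) (iimp (iimp (atm 1) (oor (atm 2) (atm 3)))
      (iimp (iimp (atm 3) (atm 4)) (iimp (iimp (atm 5) (neg (atm 4)))
      (iimp (cnj (atm 0) (atm 5)) (atm 2))))))
    (fσ [B.E, ((B.and C.E).or (B.and C.E.neg)).E, (B.and C.E).E, (B.and C.E.neg).E,
      (C.E.neg).E, C.E]) (by decide)).mp hmon |>.mp hsplit |>.mp hmon2 |>.mp h5

/-- K2: ⊢ E B ⊓ ¬E C → E (B ⊓ ¬E C). -/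
lemma thm_K2 (B C : CSLForm) : CSMS ((B.E.and (C.E.neg)).imp ((B.and C.E.neg).E)) := by
  have hsplit : CSMS ((((B.and C.E).or (B.and C.E.neg)).E).imp
      (((B.and C.E).E).or ((B.and C.E.neg).E))) := thm_split _ _ _
  have hmon : CSMS (B.E.imp (((B.and C.E).or (B.and C.E.neg)).E)) :=
    mon_E (pl (iimp (atm 0) (oor (cnj (atm 0) (atm 1)) (cnj (atm 0) (neg (atm 1)))))
      (fσ [B, C.E]) (by decide))
  have hmon2 : CSMS (((B.and C.E).E).imp (C.E.E)) :=
    mon_E (pl (iimp (cnj (atm 0) (atm 1)) (atm 1)) (fσ [B, C.E]) (by decide))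
  have hee := thm_EE C
  exact (pl (iimp (iimp (atm 0) (atm 1)) (iimp (iimp (atm 1) (oor (atm 2) (atm 3)))
      (iimp (iimp (atm 2) (atm 4)) (iimp (iimp (atm 4) (atm 5))
      (iimp (cnj (atm 0) (neg (atm 5))) (atm 3))))))
    (fσ [B.E, ((B.and C.E).or (B.and C.E.neg)).E, (B.and C.E).E, (B.and C.E.neg).E,
      C.E.E, C.E]) (by decide)).mp hmon |>.mp hsplit |>.mp hmon2 |>.mp hee

/-- From (X ⇇ B) for all B in nonempty L, infer (X ⇇ disjL L), inside an MCS. -/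
lemma mcs_cls_disj {M : Set CSLForm} (hM : IsMCS M) {X : CSLForm} {L : List CSLForm}
    (hne : L ≠ []) (h : ∀ C ∈ L, X.cls C ∈ M) : X.cls (disjL L) ∈ M := by
  induction L with
  | nil => exact absurd rfl hne
  | cons A L ih =>
    rcases eq_or_ne L [] with rfl | hLne
    · -- disjL [A] = A.or bot
      have hA : X.cls A ∈ M := h A (by simp)
      have hrw : CSMS ((X.cls A).imp (X.cls (A.or .bot))) :=
        thm_rweak X (pl (iimp (oor (atm 0) fls) (atm 0)) (fσ [A]) (by decide))
      exact mcs_imp hM hrw hA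
    · have hA : X.cls A ∈ M := h A (by simp)
      have hL : X.cls (disjL L) ∈ M := ih hLne fun C hC => h C (List.mem_cons_of_mem _ hC)
      have h5 := CSMS.ax5 X A (disjL L)
      have h5' : CSMS ((X.cls A).imp ((X.cls (disjL L)).imp (X.cls (A.or (disjL L))))) :=
        (pl (iimp (iimp (cnj (atm 0) (atm 1)) (atm 2)) (iimp (atm 0) (iimp (atm 1) (atm 2))))
          (fσ [X.cls A, X.cls (disjL L), X.cls (A.or (disjL L))]) (by decide)).mp h5
      exact mcs_mp hM (mcs_mp hM (mcs_thm hM h5') hA) hL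

/-- (disjL L ⇇ D) → disjL (L.map (·.cls D)). -/
lemma thm_cls_disj_split (D : CSLForm) (L : List CSLForm) :
    CSMS (((disjL L).cls D).imp (disjL (L.map (·.cls D)))) := by
  induction L with
  | nil =>
    have := thm_notbot D
    exact (pl (iimp (neg (atm 0)) (iimp (atm 0) fls)) (fσ [CSLForm.bot.cls D]) (by decide)).mp
      this
  | cons A L ih =>
    have hs := thm_split A (disjL L) D
    have g : CSMS ((((A.or (disjL L)).cls D).imp ((A.cls D).or ((disjL L).cls D))).imp
        (((((disjL L).cls D)).imp (disjL (List.map (fun x => CSLForm.cls x D) L))).imp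
        (((A.or (disjL L)).cls D).imp ((A.cls D).or (disjL (List.map (fun x => CSLForm.cls x D) L)))))) :=
      pl (iimp (iimp (atm 0) (oor (atm 1) (atm 2))) (iimp (iimp (atm 2) (atm 3))
          (iimp (atm 0) (oor (atm 1) (atm 3)))))
        (fσ [(A.or (disjL L)).cls D, A.cls D, (disjL L).cls D,
          disjL (List.map (fun x => CSLForm.cls x D) L)]) (by decide)
    exact g.mp hs |>.mp ih
/- ## Subformulas -/
def subf : CSLForm → List CSLForm
  | .var i => [.var i]
  | .bot => [.bot]
  | .neg B => .neg B :: subf B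
  | .and B C => .and B C :: (subf B ++ subf C)
  | .cls B C => .cls B C :: (subf B ++ subf C)

lemma mem_subf_self (F : CSLForm) : F ∈ subf F := by cases F <;> simp [subf]

lemma subf_closed : ∀ F : CSLForm, ∀ G ∈ subf F, subf G ⊆ subf F := by
  intro F
  induction F with
  | var i => intro G hG; simp [subf] at hG; subst hG; exact fun x h => h
  | bot => intro G hG; simp [subf] at hG; subst hG; exact fun x h => h
  | neg B ih =>
    intro G hG
    rcases List.mem_cons.1 hG with rfl | hG
    · exact fun x h => h
    · exact fun x hx => List.mem_cons_of_mem _ (ih G hG hx)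
  | and B C ihB ihC =>
    intro G hG
    rcases List.mem_cons.1 hG with rfl | hG
    · exact fun x h => h
    · rcases List.mem_append.1 hG with hG | hG
      · exact fun x hx => List.mem_cons_of_mem _ (List.mem_append_left _ (ihB G hG hx))
      · exact fun x hx => List.mem_cons_of_mem _ (List.mem_append_right _ (ihC G hG hx))
  | cls B C ihB ihC =>
    intro G hG
    rcases List.mem_cons.1 hG with rfl | hG
    · exact fun x h => h
    · rcases List.mem_append.1 hG with hG | hG
      · exact fun x hx => List.mem_cons_of_mem _ (List.mem_append_left _ (ihB G hG hx))
      · exact fun x hx => List.mem_cons_of_mem _ (List.mem_append_right _ (ihC G hG hx))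

lemma subf_neg_mem {F G : CSLForm} (h : G.neg ∈ subf F) : G ∈ subf F :=
  subf_closed F _ h (List.mem_cons_of_mem _ (mem_subf_self G))

lemma subf_and_mem {F G H : CSLForm} (h : G.and H ∈ subf F) : G ∈ subf F ∧ H ∈ subf F :=
  ⟨subf_closed F _ h (List.mem_cons_of_mem _ (List.mem_append_left _ (mem_subf_self G))),
   subf_closed F _ h (List.mem_cons_of_mem _ (List.mem_append_right _ (mem_subf_self H)))⟩

lemma subf_cls_mem {F G H : CSLForm} (h : G.cls H ∈ subf F) : G ∈ subf F ∧ H ∈ subf F :=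
  ⟨subf_closed F _ h (List.mem_cons_of_mem _ (List.mem_append_left _ (mem_subf_self G))),
   subf_closed F _ h (List.mem_cons_of_mem _ (List.mem_append_right _ (mem_subf_self H)))⟩

/- ## Atoms and the finite canonical model -/
section Model
open scoped Classical

variable (Φ : CSLForm) (M₀ : Set CSLForm)

/-- The i-th literal of the atom `g`. -/
def flit (g : Fin (subf Φ).length → Bool) (i : Fin (subf Φ).length) : CSLForm :=
  if g i then (subf Φ).get i else ((subf Φ).get i).neg

def lits (g : Fin (subf Φ).length → Bool) : List CSLForm :=
  (List.finRange (subf Φ).length).map (flit Φ g)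

/-- The characteristic formula of an atom. -/
def af (g : Fin (subf Φ).length → Bool) : CSLForm := conjL (lits Φ g)

/-- A "world": an atom that is realized by an MCS whose `E`-facts agree with `M₀`. -/
def Wp (g : Fin (subf Φ).length → Bool) : Prop :=
  ∃ M, IsMCS M ∧ (∀ i, (subf Φ).get i ∈ M ↔ g i = true) ∧
    (∀ h : Fin (subf Φ).length → Bool, (af Φ h).E ∈ M ↔ (af Φ h).E ∈ M₀)

def Wt := {g : Fin (subf Φ).length → Bool // Wp Φ M₀ g}

noncomputable def Mof (w : Wt Φ M₀) : Set CSLForm := w.2.choose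

lemma Mof_mcs (w : Wt Φ M₀) : IsMCS (Mof Φ M₀ w) := w.2.choose_spec.1

lemma Mof_iff (w : Wt Φ M₀) (i : Fin (subf Φ).length) :
    (subf Φ).get i ∈ Mof Φ M₀ w ↔ w.1 i = true := w.2.choose_spec.2.1 i

lemma Mof_E (w : Wt Φ M₀) (h : Fin (subf Φ).length → Bool) :
    (af Φ h).E ∈ Mof Φ M₀ w ↔ (af Φ h).E ∈ M₀ := w.2.choose_spec.2.2 h

lemma flit_mem_lits (g : Fin (subf Φ).length → Bool) (i : Fin (subf Φ).length) :
    flit Φ g i ∈ lits Φ g :=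
  List.mem_map.2 ⟨i, List.mem_finRange i, rfl⟩

/-- projection from the atom formula. -/
lemma af_proj (g : Fin (subf Φ).length → Bool) (i : Fin (subf Φ).length) :
    CSMS ((af Φ g).imp (flit Φ g i)) := conj_proj (flit_mem_lits Φ g i)

/-- the atom formula is in any MCS that matches the atom. -/
lemma af_mem {M : Set CSLForm} (hM : IsMCS M) {g : Fin (subf Φ).length → Bool}
    (h : ∀ i, (subf Φ).get i ∈ M ↔ g i = true) : af Φ g ∈ M := by
  refine mcs_conj_mem hM fun C hC => ?_
  obtain ⟨i, _, rfl⟩ := List.mem_map.1 hC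
  by_cases hg : g i = true
  · rw [flit, if_pos hg]; exact (h i).2 hg
  · rw [flit, if_neg hg]
    exact (mcs_neg_iff hM).2 fun hmem => hg ((h i).1 hmem)

end Model
/- ## S5 reasoning: realizability transfer -/

/-- Iterated K1/K2: an `E`-formula can absorb `E`-literals from the same MCS. -/
lemma s5_absorb {M₀ : Set CSLForm} (hM₀ : IsMCS M₀) {C : CSLForm} (hC : C.E ∈ M₀)
    (L : List CSLForm)
    (hL : ∀ D ∈ L, ((∃ X : CSLForm, D = X.E) ∨ (∃ X : CSLForm, D = (X.E).neg)) ∧ D ∈ M₀) :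
    (C.and (conjL L)).E ∈ M₀ := by
  induction L with
  | nil =>
    exact mcs_imp hM₀ (mon_E (pl (iimp (atm 0) (cnj (atm 0) (neg fls))) (fσ [C]) (by decide)))
      hC
  | cons D L ih =>
    have hD := hL D (List.mem_cons_self)
    have hrest : (C.and (conjL L)).E ∈ M₀ := ih fun D' hD' => hL D' (List.mem_cons_of_mem _ hD')
    set B := C.and (conjL L) with hB
    have key : (B.and D).E ∈ M₀ := by
      rcases hD.1 with ⟨X, rfl⟩ | ⟨X, rfl⟩
      · -- D = X.E, use K1
        have hand : B.E.and X.E ∈ M₀ := (mcs_and_iff hM₀).2 ⟨hrest, hD.2⟩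
        exact mcs_imp hM₀ (thm_K1 B X) hand
      · -- D = (X.E).neg, use K2
        have hand : B.E.and (X.E.neg) ∈ M₀ := (mcs_and_iff hM₀).2 ⟨hrest, hD.2⟩
        exact mcs_imp hM₀ (thm_K2 B X) hand
    -- rearrange (B ⊓ D) → (C ⊓ (D ⊓ conjL L))
    have hmon : CSMS (((B.and D).E).imp ((C.and (D.and (conjL L))).E)) :=
      mon_E (pl (iimp (cnj (cnj (atm 0) (atm 1)) (atm 2)) (cnj (atm 0) (cnj (atm 2) (atm 1))))
        (fσ [C, conjL L, D]) (by decide))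
    exact mcs_imp hM₀ hmon key

/-- If `E F ∈ M₀` (M₀ an MCS) and every member of `S` follows from `F`, then `S` is consistent. -/
lemma cons_of_E {M₀ : Set CSLForm} (hM₀ : IsMCS M₀) {F : CSLForm} (hF : F.E ∈ M₀)
    {S : Set CSLForm} (hS : ∀ B ∈ S, CSMS (F.imp B)) : ConsSet S := by
  rintro ⟨L, hL, hd⟩
  have h1 : CSMS (F.imp (conjL L)) := conj_intro_imp fun C hC => hS C (hL C hC)
  have h2 : CSMS F.neg :=
    (pl (iimp (iimp (atm 0) (atm 1)) (iimp (iimp (atm 1) fls) (neg (atm 0))))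
      (fσ [F, conjL L]) (by decide)).mp h1 |>.mp hd
  exact mcs_not_mem_neg hM₀ hF (mcs_thm hM₀ (thm_nE h2))

section Model2
open scoped Classical

variable (Φ : CSLForm) (M₀ : Set CSLForm)

/-- the `E`-literal describing M₀'s opinion about atom `h`. -/
noncomputable def dlit (h : Fin (subf Φ).length → Bool) : CSLForm :=
  if (af Φ h).E ∈ M₀ then (af Φ h).E else ((af Φ h).E).neg

noncomputable def dlist : List CSLForm :=
  (Finset.toList (Finset.univ : Finset (Fin (subf Φ).length → Bool))).map (dlit Φ M₀)

lemma dlit_mem_dlist (h : Fin (subf Φ).length → Bool) : dlit Φ M₀ h ∈ dlist Φ M₀ :=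
  List.mem_map.2 ⟨h, Finset.mem_toList.2 (Finset.mem_univ h), rfl⟩

lemma wp_of_E (hM₀ : IsMCS M₀) {g : Fin (subf Φ).length → Bool}
    (hg : (af Φ g).E ∈ M₀) : Wp Φ M₀ g := by
  -- the premise set describing the new world
  set S : Set CSLForm := {B | B ∈ lits Φ g} ∪ {B | B ∈ dlist Φ M₀} with hs
  set F : CSLForm := (af Φ g).and (conjL (dlist Φ M₀)) with hF
  have hFE : F.E ∈ M₀ := by
    refine s5_absorb hM₀ hg (dlist Φ M₀) fun D hD => ?_
    obtain ⟨h, _, rfl⟩ := List.mem_map.1 hD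
    by_cases hh : (af Φ h).E ∈ M₀
    · exact ⟨Or.inl ⟨af Φ h, by rw [dlit, if_pos hh]⟩, by rw [dlit, if_pos hh]; exact hh⟩
    · refine ⟨Or.inr ⟨af Φ h, by rw [dlit, if_neg hh]⟩, ?_⟩
      rw [dlit, if_neg hh]
      exact (mcs_neg_iff hM₀).2 hh
  have hcons : ConsSet S := by
    refine cons_of_E hM₀ hFE fun B hB => ?_
    rcases hB with hB | hB
    · exact imp_trans (pl (iimp (cnj (atm 0) (atm 1)) (atm 0))
        (fσ [af Φ g, conjL (dlist Φ M₀)]) (by decide)) (conj_proj hB)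
    · exact imp_trans (pl (iimp (cnj (atm 0) (atm 1)) (atm 1))
        (fσ [af Φ g, conjL (dlist Φ M₀)]) (by decide)) (conj_proj hB)
  obtain ⟨M, hSM, hM⟩ := lindenbaum hcons
  refine ⟨M, hM, fun i => ?_, fun h => ?_⟩
  · constructor
    · intro hmem
      by_contra hgi
      have : flit Φ g i ∈ M := hSM (Or.inl (flit_mem_lits Φ g i))
      rw [flit, if_neg hgi] at this
      exact mcs_not_mem_neg hM hmem this
    · intro hgi
      have : flit Φ g i ∈ M := hSM (Or.inl (flit_mem_lits Φ g i))
      rwa [flit, if_pos hgi] at this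
  · constructor
    · intro hmem
      by_contra hh
      have : dlit Φ M₀ h ∈ M := hSM (Or.inr (dlit_mem_dlist Φ M₀ h))
      rw [dlit, if_neg hh] at this
      exact mcs_not_mem_neg hM hmem this
    · intro hh
      have : dlit Φ M₀ h ∈ M := hSM (Or.inr (dlit_mem_dlist Φ M₀ h))
      rwa [dlit, if_pos hh] at this

lemma wp_to_E (hM₀ : IsMCS M₀) {g : Fin (subf Φ).length → Bool} (hg : Wp Φ M₀ g) :
    (af Φ g).E ∈ M₀ := by
  obtain ⟨M, hM, hiff, hE⟩ := hg
  have : af Φ g ∈ M := af_mem Φ hM hiff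
  exact (hE g).1 (mcs_imp hM (thm_ET _) this)

/-- the key equivalence: `E (af g)` holds in any world-MCS iff `g` is a world. -/
lemma E_iff_wp (hM₀ : IsMCS M₀) (w : Wt Φ M₀) (g : Fin (subf Φ).length → Bool) :
    (af Φ g).E ∈ Mof Φ M₀ w ↔ Wp Φ M₀ g := by
  rw [Mof_E]
  exact ⟨fun h => wp_of_E Φ M₀ hM₀ h, fun h => wp_to_E Φ M₀ hM₀ h⟩

end Model2
/- ## Semantics of list connectives under boolean valuations -/

lemma v_or {v : CSLForm → Bool} (hv : IsBoolVal v) (F G : CSLForm) :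
    v (F.or G) = (v F || v G) := by
  rw [CSLForm.or, hv.2.1, hv.2.2, hv.2.1, hv.2.1]
  cases v F <;> cases v G <;> rfl

lemma v_imp {v : CSLForm → Bool} (hv : IsBoolVal v) (F G : CSLForm) :
    v (F.imp G) = (!v F || v G) := by
  rw [CSLForm.imp, v_or hv, hv.2.1]

lemma v_disjL {v : CSLForm → Bool} (hv : IsBoolVal v) (L : List CSLForm) :
    v (disjL L) = true ↔ ∃ C ∈ L, v C = true := by
  induction L with
  | nil => simp [disjL, hv.1]
  | cons A L ih =>
    rw [disjL, v_or hv, Bool.or_eq_true, ih]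
    simp

lemma v_conjL {v : CSLForm → Bool} (hv : IsBoolVal v) (L : List CSLForm) :
    v (conjL L) = true ↔ ∀ C ∈ L, v C = true := by
  induction L with
  | nil => simp [conjL, CSLForm.top, hv.2.1, hv.1]
  | cons A L ih =>
    rw [conjL, hv.2.2, Bool.and_eq_true, ih]
    simp

section Model3
open scoped Classical

variable (Φ : CSLForm) (M₀ : Set CSLForm)

/-- the list of atom formulas of all atoms `g` with `g j = true`. -/
noncomputable def atomsAt (j : Fin (subf Φ).length) : List CSLForm :=
  ((Finset.toList (Finset.univ : Finset (Fin (subf Φ).length → Bool))).filter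
    (fun g => g j)).map (af Φ)

/-- key tautology: a subformula implies the disjunction of the atoms containing it. -/
lemma taut_to_disj (j : Fin (subf Φ).length) :
    CSMS (((subf Φ).get j).imp (disjL (atomsAt Φ j))) := by
  refine CSMS.taut fun v hv => ?_
  rw [v_imp hv]
  by_cases hj : v ((subf Φ).get j) = true
  · rw [(v_disjL hv _).2 ?_]
    · simp
    · refine ⟨af Φ (fun i => v ((subf Φ).get i)), ?_, ?_⟩
      · refine List.mem_map.2 ⟨_, List.mem_filter.2 ⟨Finset.mem_toList.2 (Finset.mem_univ _),
          by simpa using hj⟩, rfl⟩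
      · refine (v_conjL hv _).2 fun C hC => ?_
        obtain ⟨i, _, rfl⟩ := List.mem_map.1 hC
        by_cases hi : v ((subf Φ).get i) = true
        · rw [flit, if_pos hi]; exact hi
        · rw [flit, if_neg hi, hv.2.1]
          simpa using hi
  · simp only [List.get_eq_getElem] at hj ⊢
    rw [Bool.not_eq_true] at hj
    rw [hj]
    simp

/-- each atom with `g j = true` implies the `j`-th subformula. -/
lemma af_imp_get {g : Fin (subf Φ).length → Bool} (j : Fin (subf Φ).length)
    (hj : g j = true) : CSMS ((af Φ g).imp ((subf Φ).get j)) := by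
  have := af_proj Φ g j
  rwa [flit, if_pos hj] at this

end Model3
/- ## The canonical finite model -/
section Model4
open scoped Classical

variable (Φ : CSLForm) (M₀ : Set CSLForm)

def prefR (w x y : Wt Φ M₀) : Prop := (af Φ x.1).cls (af Φ y.1) ∈ Mof Φ M₀ w

def valu (k : ℕ) : Set (Wt Φ M₀) := {w | CSLForm.var k ∈ Mof Φ M₀ w}

instance : Finite (Wt Φ M₀) := Subtype.finite

lemma prefR_irrefl (w x : Wt Φ M₀) : ¬ prefR Φ M₀ w x x := fun h =>
  mcs_not_mem_neg (Mof_mcs Φ M₀ w) h (mcs_thm (Mof_mcs Φ M₀ w) (thm_irrefl _))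

lemma prefR_asym (w x y : Wt Φ M₀) : prefR Φ M₀ w x y → ¬ prefR Φ M₀ w y x := by
  intro h1 h2
  have hM := Mof_mcs Φ M₀ w
  have hax := mcs_thm hM (CSMS.ax1 (af Φ x.1) (af Φ y.1))
  rcases (mcs_or_iff hM).1 hax with hn | hn
  · exact mcs_not_mem_neg hM h1 hn
  · exact mcs_not_mem_neg hM h2 hn

lemma prefR_modular (w x y z : Wt Φ M₀) (h : prefR Φ M₀ w x y) :
    prefR Φ M₀ w z y ∨ prefR Φ M₀ w x z := by
  have hM := Mof_mcs Φ M₀ w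
  have hax := mcs_imp hM (CSMS.ax2 (af Φ x.1) (af Φ y.1) (af Φ z.1)) h
  rcases (mcs_or_iff hM).1 hax with h' | h'
  · exact Or.inr h'
  · exact Or.inl h'

lemma prefR_trans (w : Wt Φ M₀) {x y z : Wt Φ M₀}
    (h1 : prefR Φ M₀ w x y) (h2 : prefR Φ M₀ w y z) : prefR Φ M₀ w x z := by
  rcases prefR_modular Φ M₀ w x y z h1 with h | h
  · exact absurd h2 (prefR_asym Φ M₀ w z y h)
  · exact h

lemma prefR_centered (w x : Wt Φ M₀) : x = w ∨ prefR Φ M₀ w w x := by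
  by_cases hxw : x = w
  · exact Or.inl hxw
  right
  have hM := Mof_mcs Φ M₀ w
  have hne : w.1 ≠ x.1 := fun h => hxw (Subtype.ext h.symm)
  obtain ⟨i, hi⟩ := Function.ne_iff.1 hne
  -- af w ∈ Mof w
  have hafw : af Φ w.1 ∈ Mof Φ M₀ w := af_mem Φ hM (Mof_iff Φ M₀ w)
  -- (af x).neg ∈ Mof w
  have hnx : (af Φ x.1).neg ∈ Mof Φ M₀ w := by
    rcases Bool.eq_false_or_eq_true (w.1 i) with hw | hw
    · -- w.1 i = true, x.1 i = false
      have hx : x.1 i = false := by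
        rcases Bool.eq_false_or_eq_true (x.1 i) with hx | hx
        · exact absurd (hw.trans hx.symm) hi
        · exact hx
      have h1 : CSMS ((af Φ x.1).imp (((subf Φ).get i).neg)) := by
        have := af_proj Φ x.1 i; rwa [flit, if_neg (by simp [hx])] at this
      have h2 : (subf Φ).get i ∈ Mof Φ M₀ w := (Mof_iff Φ M₀ w i).2 hw
      exact mcs_imp hM ((pl (iimp (iimp (atm 0) (neg (atm 1)))
        (iimp (atm 1) (neg (atm 0)))) (fσ [af Φ x.1, (subf Φ).get i]) (by decide)).mp h1) h2
    · -- w.1 i = false, x.1 i = true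
      have hx : x.1 i = true := by
        rcases Bool.eq_false_or_eq_true (x.1 i) with hx | hx
        · exact hx
        · exact absurd (hw.trans hx.symm) hi
      have h1 : CSMS ((af Φ x.1).imp ((subf Φ).get i)) := by
        have := af_proj Φ x.1 i; rwa [flit, if_pos hx] at this
      have h2 : ((subf Φ).get i).neg ∈ Mof Φ M₀ w :=
        (mcs_neg_iff hM).2 fun hmem => by
          have h3 := (Mof_iff Φ M₀ w i).1 hmem
          rw [h3] at hw; exact Bool.noConfusion hw
      exact mcs_imp hM ((pl (iimp (iimp (atm 0) (atm 1))
        (iimp (neg (atm 1)) (neg (atm 0)))) (fσ [af Φ x.1, (subf Φ).get i]) (by decide)).mp h1)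
        h2
  -- ax3
  have hand : (af Φ w.1).and (af Φ x.1).neg ∈ Mof Φ M₀ w := (mcs_and_iff hM).2 ⟨hafw, hnx⟩
  exact mcs_imp hM (CSMS.ax3 (af Φ w.1) (af Φ x.1)) hand

lemma prefR_limit (w : Wt Φ M₀) (X : Set (Wt Φ M₀)) (hX : X.Nonempty) :
    {y ∈ X | ∀ z, prefR Φ M₀ w z y → z ∉ X}.Nonempty := by
  haveI : IsTrans (Wt Φ M₀) (prefR Φ M₀ w) := ⟨fun _ _ _ => prefR_trans Φ M₀ w⟩
  haveI : IsIrrefl (Wt Φ M₀) (prefR Φ M₀ w) := ⟨fun x => prefR_irrefl Φ M₀ w x⟩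
  have hwf := Finite.wellFounded_of_trans_of_irrefl (prefR Φ M₀ w)
  obtain ⟨y, hyX, hmin⟩ := hwf.has_min X hX
  exact ⟨y, hyX, fun z hz hzX => hmin z hzX hz⟩

/- ## Truth lemma -/
lemma truth (hM₀ : IsMCS M₀) :
    ∀ C, C ∈ subf Φ → ∀ w : Wt Φ M₀,
      w ∈ prefEval (prefR Φ M₀) (valu Φ M₀) C ↔ C ∈ Mof Φ M₀ w := by
  intro C
  induction C with
  | var k =>
    intro _ w
    exact Iff.rfl
  | bot =>
    intro _ w
    simp only [prefEval]
    exact ⟨fun h => absurd h (Set.notMem_empty w),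
      fun h => absurd h (mcs_bot_not_mem (Mof_mcs Φ M₀ w))⟩
  | neg B ih =>
    intro hC w
    have hB := subf_neg_mem hC
    have hih := ih hB w
    simp only [prefEval, Set.mem_compl_iff, hih]
    exact ((mcs_neg_iff (Mof_mcs Φ M₀ w)).trans Iff.rfl).symm
  | and B1 B2 ih1 ih2 =>
    intro hC w
    obtain ⟨h1, h2⟩ := subf_and_mem hC
    simp only [prefEval, Set.mem_inter_iff, ih1 h1 w, ih2 h2 w]
    exact (mcs_and_iff (Mof_mcs Φ M₀ w)).symm
  | cls B1 B2 ih1 ih2 =>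
    intro hC w
    obtain ⟨hB1, hB2⟩ := subf_cls_mem hC
    obtain ⟨j₁, hj₁⟩ := List.get_of_mem hB1
    obtain ⟨j₂, hj₂⟩ := List.get_of_mem hB2
    have hMw := Mof_mcs Φ M₀ w
    simp only [prefEval, Set.mem_setOf_eq]
    constructor
    · rintro ⟨x, hx, hall⟩
      have hx1 : B1 ∈ Mof Φ M₀ x := (ih1 hB1 x).1 hx
      have hxj : x.1 j₁ = true := (Mof_iff Φ M₀ x j₁).1 (hj₁ ▸ hx1)
      have key : ∀ C ∈ atomsAt Φ j₂, (af Φ x.1).cls C ∈ Mof Φ M₀ w := by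
        intro C hCmem
        obtain ⟨g, hgf, rfl⟩ := List.mem_map.1 hCmem
        have hgj : g j₂ = true := by simpa using (List.mem_filter.1 hgf).2
        by_cases wp : Wp Φ M₀ g
        · have hy : B2 ∈ Mof Φ M₀ ⟨g, wp⟩ := hj₂ ▸ ((Mof_iff Φ M₀ ⟨g, wp⟩ j₂).2 hgj)
          exact hall ⟨g, wp⟩ ((ih2 hB2 ⟨g, wp⟩).2 hy)
        · have hnE : (af Φ g).E ∉ Mof Φ M₀ w :=
            fun hE => wp ((E_iff_wp Φ M₀ hM₀ w g).1 hE)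
          have hxE : (af Φ x.1).E ∈ Mof Φ M₀ w := (E_iff_wp Φ M₀ hM₀ w x.1).2 x.2
          have hor := mcs_imp hMw (CSMS.ax2 (af Φ x.1) .bot (af Φ g)) hxE
          rcases (mcs_or_iff hMw).1 hor with h' | h'
          · exact h'
          · exact absurd h' hnE
      have hne : atomsAt Φ j₂ ≠ [] := by
        refine List.ne_nil_of_mem (a := af Φ (fun _ => true)) ?_
        exact List.mem_map.2 ⟨_, List.mem_filter.2
          ⟨Finset.mem_toList.2 (Finset.mem_univ _), by simp⟩, rfl⟩
      have hd : (af Φ x.1).cls (disjL (atomsAt Φ j₂)) ∈ Mof Φ M₀ w :=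
        mcs_cls_disj hMw hne key
      have htd : CSMS (B2.imp (disjL (atomsAt Φ j₂))) := by
        have := taut_to_disj Φ j₂; rwa [hj₂] at this
      have h5 : (af Φ x.1).cls B2 ∈ Mof Φ M₀ w := mcs_imp hMw (thm_rweak _ htd) hd
      have hmon : CSMS ((af Φ x.1).imp B1) := by
        have := af_imp_get Φ j₁ hxj; rwa [hj₁] at this
      exact mcs_imp hMw (CSMS.mon B2 hmon) h5
    · intro hc
      have h1 : CSMS (B1.imp (disjL (atomsAt Φ j₁))) := by
        have := taut_to_disj Φ j₁; rwa [hj₁] at this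
      have h2 : (disjL (atomsAt Φ j₁)).cls B2 ∈ Mof Φ M₀ w :=
        mcs_imp hMw (CSMS.mon B2 h1) hc
      have h3 := mcs_imp hMw (thm_cls_disj_split B2 (atomsAt Φ j₁)) h2
      obtain ⟨C, hCmem, hCM⟩ := mcs_disj_elim hMw h3
      obtain ⟨Caf, hCaf, rfl⟩ := List.mem_map.1 hCmem
      obtain ⟨g, hgf, rfl⟩ := List.mem_map.1 hCaf
      have hgj : g j₁ = true := by simpa using (List.mem_filter.1 hgf).2
      have hE : (af Φ g).E ∈ Mof Φ M₀ w := by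
        have hr : CSMS (((af Φ g).cls B2).imp ((af Φ g).cls .bot)) :=
          thm_rweak _ (pl (iimp fls (atm 0)) (fσ [B2]) (by decide))
        exact mcs_imp hMw hr hCM
      have wp : Wp Φ M₀ g := (E_iff_wp Φ M₀ hM₀ w g).1 hE
      refine ⟨⟨g, wp⟩, ?_, ?_⟩
      · exact (ih1 hB1 ⟨g, wp⟩).2 (hj₁ ▸ ((Mof_iff Φ M₀ ⟨g, wp⟩ j₁).2 hgj))
      · intro y hy
        have hy2 : B2 ∈ Mof Φ M₀ y := (ih2 hB2 y).1 hy
        have hyj : y.1 j₂ = true := (Mof_iff Φ M₀ y j₂).1 (hj₂ ▸ hy2)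
        have haf : CSMS ((af Φ y.1).imp B2) := by
          have := af_imp_get Φ j₂ hyj; rwa [hj₂] at this
        exact mcs_imp hMw (thm_rweak _ haf) hCM
  end Model4

/-- completeness of CSMS with respect to CSL-preferential models. -/
theorem CSMS_complete (A : CSLForm)
    (h : ∀ (W : Type) (M : CSLPrefModel W), M.eval A = Set.univ) :
    CSMS A := by
  classical
  by_contra hA
  have hcons : ConsSet {CSLForm.neg A} := by
    rintro ⟨L, hL, hd⟩
    have h1 : CSMS ((A.neg).imp (conjL L)) := conj_intro_imp fun C hC => by
      have hCA : C = A.neg := hL C hC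
      rw [hCA]
      exact imp_refl _
    exact hA ((pl (iimp (iimp (neg (atm 0)) (atm 1)) (iimp (iimp (atm 1) fls) (atm 0)))
      (fσ [A, conjL L]) (by decide)).mp h1 |>.mp hd)
  obtain ⟨M₀, hsub, hM₀⟩ := lindenbaum hcons
  have hAneg : A.neg ∈ M₀ := hsub rfl
  have hWp : Wp A M₀ (fun i => decide ((subf A).get i ∈ M₀)) :=
    ⟨M₀, hM₀, fun i => by simp, fun _ => Iff.rfl⟩
  let w₀ : Wt A M₀ := ⟨_, hWp⟩
  let Mdl : CSLPrefModel (Wt A M₀) :=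
    { ne := ⟨w₀⟩
      pref := prefR A M₀
      modular := prefR_modular A M₀
      centered := prefR_centered A M₀
      limit := prefR_limit A M₀
      val := valu A M₀ }
  have hw₀ : w₀ ∈ Mdl.eval A := by rw [h (Wt A M₀) Mdl]; trivial
  have hw0' : w₀ ∈ prefEval (prefR A M₀) (valu A M₀) A := hw₀
  have htr : A ∈ Mof A M₀ w₀ := (truth A M₀ hM₀ A (mem_subf_self A) w₀).1 hw0'
  obtain ⟨j, hj⟩ := List.get_of_mem (mem_subf_self A)
  have hmem : (subf A).get j ∈ Mof A M₀ w₀ := hj.symm ▸ htr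
  have hbj : w₀.1 j = true := (Mof_iff A M₀ w₀ j).1 hmem
  have hAM₀ : A ∈ M₀ := by
    rw [← hj]
    exact of_decide_eq_true hbj
  exact mcs_not_mem_neg hM₀ hAM₀ hAneg
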